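/- arXiv:2309.05167 — 2 statements merged into one kernel-verified Lean document; each statement's English description precedes it below -/
import Mathlib

section
/- Proposition 2 (mixed-monotonicity output bound, one output component): Let n be a positive natural number, a, b : Fin n → ℝ with a j ≤ b j for all j, and let f : (Fin n → ℝ) → ℝ be differentiable on an open convex set containing the box B = {x : ∀ j, a j ≤ x j ≤ b j}. Suppose J̲, J̄ : Fin n → ℝ satisfy J̲ j ≤ ∂f/∂x_j (x) ≤ J̄ j for all x ∈ B and all j. For each j let J* j = (J̲ j + J̄ j)/2 and define: if J* j ≥ 0 then ψ̲ j = a j, ψ̄ j = b j, α j = min(0, J̲ j); otherwise ψ̲ j = b j, ψ̄ j = a j, α j = max(0, J̄ j). Then for every x ∈ B: f(ψ̲) - Σ_j α j · (ψ̲ j - ψ̄ j) ≤ f(x) ≤ f(ψ̄) + Σ_j α j · (ψ̲ j - ψ̄ j). -/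
private lemma key_neg {α d L t : ℝ} (hα0 : α ≤ 0) (hαd : α ≤ d) (hLt : L ≤ t) (ht : t ≤ 0) :
    d * t ≤ α * L := by
  rcases le_or_gt 0 d with h | h
  · nlinarith
  · nlinarith

private lemma key_pos {α d t M : ℝ} (hα0 : 0 ≤ α) (hdα : d ≤ α) (h0t : 0 ≤ t) (htM : t ≤ M) :
    d * t ≤ α * M := by
  rcases le_or_gt d 0 with h | h
  · nlinarith
  · nlinarith

private lemma clm_apply_eq_sum {n : ℕ} (L : (Fin n → ℝ) →L[ℝ] ℝ) (v : Fin n → ℝ) :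
    L v = ∑ j, v j * L (Pi.single j 1) := by
  have : v = ∑ j, v j • (Pi.single j 1 : Fin n → ℝ) := by
    ext k; simp [Pi.single_apply, eq_comm]
  conv_lhs => rw [this]
  rw [map_sum]
  simp [smul_eq_mul]

open Finset in
/-- Proposition 2 (mixed-monotonicity output bound, one output component):
given interval bounds `[Jlo, Jhi]` on all partial derivatives of `f` over the box
`B = [a, b]`, the value of `f` on the box is sandwiched between evaluations of `f`
at the corner-type points `ψlo`, `ψhi` corrected by the slack vector `α`. -/
theorem mixed_monotonicity_bound
    {n : ℕ} (hn : 0 < n) (a b : Fin n → ℝ) (hab : ∀ j, a j ≤ b j)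
    (f : (Fin n → ℝ) → ℝ)
    (U : Set (Fin n → ℝ)) (hUopen : IsOpen U) (hUconv : Convex ℝ U)
    (hBU : {x : Fin n → ℝ | ∀ j, a j ≤ x j ∧ x j ≤ b j} ⊆ U)
    (hf : DifferentiableOn ℝ f U)
    (Jlo Jhi : Fin n → ℝ)
    (hJ : ∀ x ∈ {x : Fin n → ℝ | ∀ j, a j ≤ x j ∧ x j ≤ b j}, ∀ j,
        Jlo j ≤ fderiv ℝ f x (Pi.single j 1) ∧ fderiv ℝ f x (Pi.single j 1) ≤ Jhi j)
    (ψlo ψhi α : Fin n → ℝ)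
    (hψlo : ∀ j, ψlo j = if 0 ≤ (Jlo j + Jhi j) / 2 then a j else b j)
    (hψhi : ∀ j, ψhi j = if 0 ≤ (Jlo j + Jhi j) / 2 then b j else a j)
    (hα : ∀ j, α j = if 0 ≤ (Jlo j + Jhi j) / 2 then min 0 (Jlo j) else max 0 (Jhi j)) :
    ∀ x ∈ {x : Fin n → ℝ | ∀ j, a j ≤ x j ∧ x j ≤ b j},
      f ψlo - ∑ j, α j * (ψlo j - ψhi j) ≤ f x ∧
      f x ≤ f ψhi + ∑ j, α j * (ψlo j - ψhi j) := by
  intro x hx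
  set B : Set (Fin n → ℝ) := {x | ∀ j, a j ≤ x j ∧ x j ≤ b j} with hB
  have hBconv : Convex ℝ B := by
    intro u hu v hv s t hs ht hst j
    have h1 := (hu j).1; have h2 := (hu j).2
    have h3 := (hv j).1; have h4 := (hv j).2
    simp only [Pi.add_apply, Pi.smul_apply, smul_eq_mul]
    have e1 : a j = s * a j + t * a j := by rw [← add_mul, hst, one_mul]
    have e2 : b j = s * b j + t * b j := by rw [← add_mul, hst, one_mul]
    constructor
    · rw [e1]
      have := mul_le_mul_of_nonneg_left h1 hs
      have := mul_le_mul_of_nonneg_left h3 ht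
      linarith
    · rw [e2]
      have := mul_le_mul_of_nonneg_left h2 hs
      have := mul_le_mul_of_nonneg_left h4 ht
      linarith
  have hdiff : ∀ y ∈ B, HasFDerivWithinAt f (fderiv ℝ f y) B y := fun y hy =>
    ((hf.differentiableAt (hUopen.mem_nhds (hBU hy))).hasFDerivAt).hasFDerivWithinAt
  have hψloB : ψlo ∈ B := by
    intro j; rw [hψlo j]; split_ifs
    · exact ⟨le_refl _, hab j⟩
    · exact ⟨hab j, le_refl _⟩
  have hψhiB : ψhi ∈ B := by
    intro j; rw [hψhi j]; split_ifs
    · exact ⟨hab j, le_refl _⟩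
    · exact ⟨le_refl _, hab j⟩
  constructor
  · obtain ⟨c, hc, hcf⟩ := domain_mvt hdiff hBconv hψloB hx
    have hcB : c ∈ B := hBconv.segment_subset hψloB hx hc
    have key : ∀ j, fderiv ℝ f c (Pi.single j 1) * (ψlo j - x j) ≤ α j * (ψlo j - ψhi j) := by
      intro j
      obtain ⟨hl, hh⟩ := hJ c hcB j
      obtain ⟨hx1, hx2⟩ := hx j
      rw [hψlo j, hψhi j, hα j]
      split_ifs with h
      · exact key_neg (min_le_left _ _) ((min_le_right _ _).trans hl)
          (by linarith) (by linarith)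
      · exact key_pos (le_max_left _ _) (hh.trans (le_max_right _ _))
          (by linarith) (by linarith)
    have hsum : fderiv ℝ f c (x - ψlo) = ∑ j, (x j - ψlo j) * fderiv ℝ f c (Pi.single j 1) := by
      rw [clm_apply_eq_sum]; rfl
    have : f x - f ψlo = ∑ j, (x j - ψlo j) * fderiv ℝ f c (Pi.single j 1) := by
      rw [hcf, hsum]
    have hge : -∑ j, α j * (ψlo j - ψhi j) ≤ ∑ j, (x j - ψlo j) * fderiv ℝ f c (Pi.single j 1) := by
      rw [← Finset.sum_neg_distrib]
      apply Finset.sum_le_sum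
      intro j _
      have := key j
      nlinarith [key j]
    linarith [this, hge]
  · obtain ⟨c, hc, hcf⟩ := domain_mvt hdiff hBconv hx hψhiB
    have hcB : c ∈ B := hBconv.segment_subset hx hψhiB hc
    have key : ∀ j, fderiv ℝ f c (Pi.single j 1) * (x j - ψhi j) ≤ α j * (ψlo j - ψhi j) := by
      intro j
      obtain ⟨hl, hh⟩ := hJ c hcB j
      obtain ⟨hx1, hx2⟩ := hx j
      rw [hψlo j, hψhi j, hα j]
      split_ifs with h
      · exact key_neg (min_le_left _ _) ((min_le_right _ _).trans hl)
          (by linarith) (by linarith)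
      · exact key_pos (le_max_left _ _) (hh.trans (le_max_right _ _))
          (by linarith) (by linarith)
    have hsum : fderiv ℝ f c (ψhi - x) = ∑ j, (ψhi j - x j) * fderiv ℝ f c (Pi.single j 1) := by
      rw [clm_apply_eq_sum]; rfl
    have heq : f ψhi - f x = ∑ j, (ψhi j - x j) * fderiv ℝ f c (Pi.single j 1) := by
      rw [hcf, hsum]
    have hge : ∑ j, (x j - ψhi j) * fderiv ℝ f c (Pi.single j 1) ≤ ∑ j, α j * (ψlo j - ψhi j) := by
      apply Finset.sum_le_sum
      intro j _
      nlinarith [key j]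
    have : -(f ψhi - f x) ≤ ∑ j, α j * (ψlo j - ψhi j) := by
      rw [heq, ← Finset.sum_neg_distrib]
      refine le_trans (le_of_eq ?_) hge
      apply Finset.sum_congr rfl
      intro j _; ring
    linarith
end

section
/- Let ζ₁, ζ₂, ζ₃, ζ₄ ∈ ℝ with ζ₂ ≠ ζ₄, let θ = arctan((ζ₁ - ζ₃)/(ζ₄ - ζ₂)) and ρ = ζ₁ · cos θ + ζ₂ · sin θ. Then for every point (x, y) ∈ ℝ², the point lies on the line through P₁ = (ζ₁, ζ₂) and P₂ = (ζ₃, ζ₄) (i.e., there exists t ∈ ℝ with (x, y) = (1-t) · P₁ + t · P₂) if and only if x · cos θ + y · sin θ = ρ. -/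
open Real

/-- The Hough normal form exactly characterizes the line through the two projected
runway endpoints `P₁ = (ζ₁, ζ₂)` and `P₂ = (ζ₃, ζ₄)`. -/
theorem hough_line_characterization
    (ζ₁ ζ₂ ζ₃ ζ₄ : ℝ) (h : ζ₂ ≠ ζ₄)
    (θ : ℝ) (hθ : θ = arctan ((ζ₁ - ζ₃) / (ζ₄ - ζ₂)))
    (ρ : ℝ) (hρ : ρ = ζ₁ * cos θ + ζ₂ * sin θ)
    (x y : ℝ) :
    (∃ t : ℝ, x = (1 - t) * ζ₁ + t * ζ₃ ∧ y = (1 - t) * ζ₂ + t * ζ₄) ↔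
      x * cos θ + y * sin θ = ρ := by
  subst hθ hρ
  have hd : ζ₄ - ζ₂ ≠ 0 := sub_ne_zero.mpr (Ne.symm h)
  set m := (ζ₁ - ζ₃) / (ζ₄ - ζ₂) with hm
  have hcos : cos (arctan m) ≠ 0 := (Real.cos_arctan_pos m).ne'
  have htan : sin (arctan m) = m * cos (arctan m) := by
    have := Real.tan_arctan m
    rw [Real.tan_eq_sin_div_cos] at this
    field_simp at this
    linarith
  constructor
  · rintro ⟨t, hx, hy⟩
    subst hx hy
    rw [htan, hm]
    field_simp
    ring
  · intro hxy
    rw [htan] at hxy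
    have key : x + y * m = ζ₁ + ζ₂ * m := by
      have h2 : cos (arctan m) * (x + y * m - ζ₁ - ζ₂ * m) = 0 := by linear_combination hxy
      have := mul_eq_zero.mp h2
      rcases this with h3 | h3
      · exact absurd h3 hcos
      · linarith
    rw [hm] at key
    refine ⟨(y - ζ₂) / (ζ₄ - ζ₂), ?_, ?_⟩
    · field_simp at key ⊢
      nlinarith [key]
    · field_simp
      ring
end
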